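/- For every y₀ ∈ L²(Ω), f ∈ L²(Q_T) and F ∈ L²(Q_T)^N, there exists a unique solution by transposition (y,p) ∈ L²(Q_T) × L²(Q_T)^N of the first-order parabolic system y_t − ∇·p + dy = f, c(x)∇y − p = F in Q_T, y = 0 on Σ_T, y(·,0) = y₀. -/

import Mathlib

open MeasureTheory
open scoped RealInnerProductSpace

/-!
Abstract formalization of Proposition A.2 (Appendix) of Cîndea–Münch:
existence and uniqueness of the solution by transposition of the first-order
parabolic system

  `y_t − ∇·p + d y = f`, `c(x)∇y − p = F` in `Q_T = Ω×(0,T)`,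
  `y = 0` on `Σ_T`, `y(·,0) = y₀`,

for `y₀ ∈ L²(Ω)`, `f ∈ L²(Q_T)`, `F ∈ L²(Q_T)^N`.

The Gelfand triple `H¹₀(Ω) ⊂ L²(Ω) ⊂ H⁻¹(Ω)` is modelled by Hilbert spaces
`V` (= `H¹₀(Ω)`), `H` (= `L²(Ω)`), `W` (= `L²(Ω)^N`), a continuous injection
`ι : V → H`, the gradient `grad : V → W`, the multiplication `cInv : W → W`
by `c(x)⁻¹` and the multiplication `dmul t : H → H` by `d(·,t)`.
`L²(Q_T) = L²(0,T;L²(Ω))` and `L²(Q_T)^N = L²(0,T;L²(Ω)^N)` are the Bochner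
spaces `Lp H 2` and `Lp W 2` over `(0,T)`.

A pair `(y,p) ∈ L²(Q_T) × L²(Q_T)^N` is a solution by transposition
(Definition A.2) if `∫∫ (y,p)·(g,G) = M(g,G)` for every
`(g,G) ∈ L²(Q_T) × L²(Q_T)^N`, where
`M(g,G) = ∫∫ f φ + (y₀,φ(·,0)) + ∫∫ c⁻¹F·σ` and `(φ,σ)` is the unique
backward weak solution of `−φ_t − ∇·σ + dφ = g`, `∇φ − c⁻¹σ = G`, `φ = 0` on
`Σ_T`, `φ(·,T) = 0`.  The existence (`hback`) and the energy estimate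
(`hbackest`) for the backward weak solutions are granted by the
weak-solution theory of the Appendix (Proposition A.1 reversed in time).
-/

variable {V H W : Type*}
  [NormedAddCommGroup V] [InnerProductSpace ℝ V] [CompleteSpace V]
  [NormedAddCommGroup H] [InnerProductSpace ℝ H] [CompleteSpace H]
  [NormedAddCommGroup W] [InnerProductSpace ℝ W] [CompleteSpace W]

/-- Weak solution of the backward first-order parabolic system
`−φ_t − ∇·σ + dφ = g`, `∇φ − c⁻¹σ = G` in `Q_T`, `φ = 0` on `Σ_T`,
`φ(·,T) = 0`. -/
def IsBackwardWeakSolution (T : ℝ) (ι : V →L[ℝ] H) (grad : V →L[ℝ] W)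
    (cInv : W →L[ℝ] W) (dmul : ℝ → H →L[ℝ] H)
    (g : ℝ → H) (G : ℝ → W)
    (φ : ℝ → V) (φt : ℝ → V →L[ℝ] ℝ) (σ : ℝ → W) : Prop :=
  MemLp φ 2 (volume.restrict (Set.Ioo 0 T)) ∧
  MemLp φt 2 (volume.restrict (Set.Ioo 0 T)) ∧
  MemLp σ 2 (volume.restrict (Set.Ioo 0 T)) ∧
  (∀ w : V, ∀ᵐ t ∂(volume.restrict (Set.Ioo 0 T)),
    HasDerivAt (fun s => ⟪ι (φ s), ι w⟫) (φt t w) t) ∧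
  (∀ᵐ t ∂(volume.restrict (Set.Ioo 0 T)), ∀ w : V,
    -φt t w + ⟪σ t, grad w⟫ + ⟪dmul t (ι (φ t)), ι w⟫ = ⟪g t, ι w⟫) ∧
  (∀ᵐ t ∂(volume.restrict (Set.Ioo 0 T)), ∀ u : W,
    ⟪grad (φ t), u⟫ - ⟪cInv (σ t), u⟫ = ⟪G t, u⟫) ∧
  ContinuousOn (fun t => ι (φ t)) (Set.Icc 0 T) ∧ ι (φ T) = 0

-- auxiliary lemmas
namespace CMaux

variable {T : ℝ} {ι : V →L[ℝ] H} {grad : V →L[ℝ] W} {cInv : W →L[ℝ] W}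
  {dmul : ℝ → H →L[ℝ] H}

theorem bws_add {g g' : ℝ → H} {G G' : ℝ → W} {φ φ' : ℝ → V}
    {φt φt' : ℝ → V →L[ℝ] ℝ} {σ σ' : ℝ → W}
    (h1 : IsBackwardWeakSolution T ι grad cInv dmul g G φ φt σ)
    (h2 : IsBackwardWeakSolution T ι grad cInv dmul g' G' φ' φt' σ') :
    IsBackwardWeakSolution T ι grad cInv dmul (g + g') (G + G')
      (φ + φ') (φt + φt') (σ + σ') := by
  obtain ⟨m1, m2, m3, hd, he1, he2, hc, hT⟩ := h1
  obtain ⟨m1', m2', m3', hd', he1', he2', hc', hT'⟩ := h2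
  refine ⟨m1.add m1', MemLp.add (ε := V →L[ℝ] ℝ) m2 m2', m3.add m3', ?_, ?_, ?_, ?_, ?_⟩
  · intro w
    filter_upwards [hd w, hd' w] with t h h'
    have : (fun s => ⟪ι ((φ + φ') s), ι w⟫) =
        fun s => ⟪ι (φ s), ι w⟫ + ⟪ι (φ' s), ι w⟫ := by
      funext s; simp [inner_add_left]
    rw [this]
    exact h.add h'
  · filter_upwards [he1, he1'] with t h h' w
    have := h w; have := h' w
    simp only [Pi.add_apply, ContinuousLinearMap.add_apply, map_add,
      inner_add_left, inner_add_right]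
    linarith
  · filter_upwards [he2, he2'] with t h h' u
    have := h u; have := h' u
    simp only [Pi.add_apply, map_add, inner_add_left]
    linarith
  · have : (fun t => ι ((φ + φ') t)) = fun t => ι (φ t) + ι (φ' t) := by
      funext t; simp
    rw [this]; exact hc.add hc'
  · simp [hT, hT']

theorem bws_smul (r : ℝ) {g : ℝ → H} {G : ℝ → W} {φ : ℝ → V}
    {φt : ℝ → V →L[ℝ] ℝ} {σ : ℝ → W}
    (h1 : IsBackwardWeakSolution T ι grad cInv dmul g G φ φt σ) :
    IsBackwardWeakSolution T ι grad cInv dmul (r • g) (r • G)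
      (r • φ) (r • φt) (r • σ) := by
  obtain ⟨m1, m2, m3, hd, he1, he2, hc, hT⟩ := h1
  refine ⟨m1.const_smul r, m2.const_smul r, m3.const_smul r, ?_, ?_, ?_, ?_, ?_⟩
  · intro w
    filter_upwards [hd w] with t h
    have : (fun s => ⟪ι ((r • φ) s), ι w⟫) = fun s => r * ⟪ι (φ s), ι w⟫ := by
      funext s; simp [real_inner_smul_left]
    rw [this]
    simpa [mul_comm] using h.const_mul r
  · filter_upwards [he1] with t h w
    have := h w
    simp only [Pi.smul_apply, ContinuousLinearMap.smul_apply, _root_.map_smul,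
      real_inner_smul_left, smul_eq_mul]
    linear_combination r * this
  · filter_upwards [he2] with t h u
    have := h u
    simp only [Pi.smul_apply, _root_.map_smul, real_inner_smul_left]
    linear_combination r * this
  · have : (fun t => ι ((r • φ) t)) = fun t => r • ι (φ t) := by
      funext t; simp
    rw [this]; exact hc.const_smul r
  · simp [hT]

end CMaux

namespace CMaux

set_option linter.unusedSectionVars false

variable {T : ℝ} {ι : V →L[ℝ] H} {grad : V →L[ℝ] W} {cInv : W →L[ℝ] W}
  {dmul : ℝ → H →L[ℝ] H}

theorem bws_congr {g g' : ℝ → H} {G G' : ℝ → W} {φ : ℝ → V}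
    {φt : ℝ → V →L[ℝ] ℝ} {σ : ℝ → W}
    (hg : g =ᵐ[volume.restrict (Set.Ioo 0 T)] g')
    (hG : G =ᵐ[volume.restrict (Set.Ioo 0 T)] G')
    (h1 : IsBackwardWeakSolution T ι grad cInv dmul g G φ φt σ) :
    IsBackwardWeakSolution T ι grad cInv dmul g' G' φ φt σ := by
  obtain ⟨m1, m2, m3, hd, he1, he2, hc, hT⟩ := h1
  refine ⟨m1, m2, m3, hd, ?_, ?_, hc, hT⟩
  · filter_upwards [he1, hg] with t h hgt w
    rw [← hgt]; exact h w
  · filter_upwards [he2, hG] with t h hGt u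
    rw [← hGt]; exact h u

/-- inner product of two L² functions is integrable -/
theorem integrable_inner_of_memℒp {α : Type*} [MeasurableSpace α] {μ : Measure α}
    {E : Type*} [NormedAddCommGroup E] [InnerProductSpace ℝ E]
    {f h : α → E} (hf : MemLp f 2 μ) (hh : MemLp h 2 μ) :
    Integrable (fun t => ⟪f t, h t⟫) μ := by
  have := L2.integrable_inner (𝕜 := ℝ) (hf.toLp f) (hh.toLp h)
  refine this.congr ?_
  filter_upwards [hf.coeFn_toLp, hh.coeFn_toLp] with t h1 h2
  rw [h1, h2]

theorem integrable_normsq_of_memℒp {α : Type*} [MeasurableSpace α] {μ : Measure α}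
    {E : Type*} [NormedAddCommGroup E] [InnerProductSpace ℝ E]
    {f : α → E} (hf : MemLp f 2 μ) :
    Integrable (fun t => ‖f t‖ ^ 2) μ := by
  have := integrable_inner_of_memℒp hf hf
  refine this.congr (Filter.Eventually.of_forall fun t => ?_)
  simpa using real_inner_self_eq_norm_sq (f t)

/-- well-definedness: two backward solutions of a.e.-equal data have
a.e.-equal observables. -/
theorem bws_welldef {C : ℝ} (hC : 0 < C)
    (hest : ∀ (g : ℝ → H) (G : ℝ → W)
      (φ : ℝ → V) (φt : ℝ → V →L[ℝ] ℝ) (σ : ℝ → W),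
      IsBackwardWeakSolution T ι grad cInv dmul g G φ φt σ →
      (∫ t in Set.Ioo 0 T, ‖ι (φ t)‖ ^ 2) + ‖ι (φ 0)‖ ^ 2 +
          (∫ t in Set.Ioo 0 T, ‖σ t‖ ^ 2) ≤
        C * ((∫ t in Set.Ioo 0 T, ‖g t‖ ^ 2) +
          (∫ t in Set.Ioo 0 T, ‖G t‖ ^ 2)))
    {g g' : ℝ → H} {G G' : ℝ → W} {φ φ' : ℝ → V}
    {φt φt' : ℝ → V →L[ℝ] ℝ} {σ σ' : ℝ → W}
    (hg : g =ᵐ[volume.restrict (Set.Ioo 0 T)] g')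
    (hG : G =ᵐ[volume.restrict (Set.Ioo 0 T)] G')
    (h1 : IsBackwardWeakSolution T ι grad cInv dmul g G φ φt σ)
    (h2 : IsBackwardWeakSolution T ι grad cInv dmul g' G' φ' φt' σ') :
    ((fun t => ι (φ t)) =ᵐ[volume.restrict (Set.Ioo 0 T)] fun t => ι (φ' t)) ∧
      ι (φ 0) = ι (φ' 0) ∧
      σ =ᵐ[volume.restrict (Set.Ioo 0 T)] σ' := by
  set μ := volume.restrict (Set.Ioo 0 T) with hμ
  have hsub : IsBackwardWeakSolution T ι grad cInv dmul (g + (-1 : ℝ) • g')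
      (G + (-1 : ℝ) • G') (φ + (-1 : ℝ) • φ') (φt + (-1 : ℝ) • φt')
      (σ + (-1 : ℝ) • σ') := bws_add h1 (bws_smul (-1) h2)
  have hgz : (fun t => ‖(g + (-1 : ℝ) • g') t‖ ^ 2) =ᵐ[μ] 0 := by
    filter_upwards [hg] with t ht
    simp [ht]
  have hGz : (fun t => ‖(G + (-1 : ℝ) • G') t‖ ^ 2) =ᵐ[μ] 0 := by
    filter_upwards [hG] with t ht
    simp [ht]
  have hrhs : (∫ t in Set.Ioo 0 T, ‖(g + (-1 : ℝ) • g') t‖ ^ 2) +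
      (∫ t in Set.Ioo 0 T, ‖(G + (-1 : ℝ) • G') t‖ ^ 2) = 0 := by
    rw [integral_congr_ae hgz, integral_congr_ae hGz]
    simp
  have hest' := hest _ _ _ _ _ hsub
  rw [hrhs, mul_zero] at hest'
  -- nonnegativity of the three terms
  have hA : 0 ≤ ∫ t in Set.Ioo 0 T, ‖ι ((φ + (-1 : ℝ) • φ') t)‖ ^ 2 :=
    integral_nonneg fun t => sq_nonneg _
  have hB : (0 : ℝ) ≤ ‖ι ((φ + (-1 : ℝ) • φ') 0)‖ ^ 2 := sq_nonneg _
  have hD : 0 ≤ ∫ t in Set.Ioo 0 T, ‖(σ + (-1 : ℝ) • σ') t‖ ^ 2 :=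
    integral_nonneg fun t => sq_nonneg _
  have hAz : (∫ t in Set.Ioo 0 T, ‖ι ((φ + (-1 : ℝ) • φ') t)‖ ^ 2) = 0 :=
    le_antisymm (by linarith) hA
  have hBz : ‖ι ((φ + (-1 : ℝ) • φ') 0)‖ ^ 2 = 0 :=
    le_antisymm (by linarith) hB
  have hDz : (∫ t in Set.Ioo 0 T, ‖(σ + (-1 : ℝ) • σ') t‖ ^ 2) = 0 :=
    le_antisymm (by linarith) hD
  have hmφ : MemLp (fun t => ι ((φ + (-1 : ℝ) • φ') t)) 2 μ := by
    have := (ContinuousLinearMap.comp_memLp' ι hsub.1)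
    exact this
  refine ⟨?_, ?_, ?_⟩
  · have := (integral_eq_zero_iff_of_nonneg_ae
      (Filter.Eventually.of_forall fun t => sq_nonneg _)
      (integrable_normsq_of_memℒp hmφ)).mp hAz
    filter_upwards [this] with t ht
    have : ‖ι (φ t) - ι (φ' t)‖ ^ 2 = 0 := by
      simpa [sub_eq_add_neg] using ht
    have := pow_eq_zero_iff (n := 2) (by norm_num) |>.mp this
    rw [norm_eq_zero, sub_eq_zero] at this
    exact this
  · have : ‖ι (φ 0) - ι (φ' 0)‖ ^ 2 = 0 := by
      simpa [sub_eq_add_neg] using hBz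
    have := pow_eq_zero_iff (n := 2) (by norm_num) |>.mp this
    rwa [norm_eq_zero, sub_eq_zero] at this
  · have := (integral_eq_zero_iff_of_nonneg_ae
      (Filter.Eventually.of_forall fun t => sq_nonneg _)
      (integrable_normsq_of_memℒp hsub.2.2.1)).mp hDz
    filter_upwards [this] with t ht
    have : ‖σ t - σ' t‖ ^ 2 = 0 := by
      simpa [sub_eq_add_neg] using ht
    have := pow_eq_zero_iff (n := 2) (by norm_num) |>.mp this
    rwa [norm_eq_zero, sub_eq_zero] at this

end CMaux

namespace CMaux

set_option linter.unusedSectionVars false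

/-- the transposition functional value computed from a backward solution -/
noncomputable def Mval (T : ℝ) (ι : V →L[ℝ] H) (cInv : W →L[ℝ] W)
    (f : ℝ → H) (F : ℝ → W) (y0 : H) (φ : ℝ → V) (σ : ℝ → W) : ℝ :=
  (∫ t in Set.Ioo 0 T, ⟪f t, ι (φ t)⟫) + ⟪y0, ι (φ 0)⟫ +
    ∫ t in Set.Ioo 0 T, ⟪cInv (F t), σ t⟫

theorem inner_toLp_eq {α : Type*} [MeasurableSpace α] {μ : Measure α}
    {E : Type*} [NormedAddCommGroup E] [InnerProductSpace ℝ E]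
    {f h : α → E} (hf : MemLp f 2 μ) (hh : MemLp h 2 μ) :
    ⟪hf.toLp f, hh.toLp h⟫ = ∫ t, ⟪f t, h t⟫ ∂μ := by
  rw [L2.inner_def]
  refine integral_congr_ae ?_
  filter_upwards [hf.coeFn_toLp, hh.coeFn_toLp] with t h1 h2
  rw [h1, h2]

theorem norm_toLp_sq {α : Type*} [MeasurableSpace α] {μ : Measure α}
    {E : Type*} [NormedAddCommGroup E] [InnerProductSpace ℝ E]
    {f : α → E} (hf : MemLp f 2 μ) :
    ‖hf.toLp f‖ ^ 2 = ∫ t, ‖f t‖ ^ 2 ∂μ := by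
  rw [← real_inner_self_eq_norm_sq, inner_toLp_eq hf hf]
  refine integral_congr_ae (Filter.Eventually.of_forall fun t => ?_)
  exact real_inner_self_eq_norm_sq (f t)

variable {T : ℝ} {ι : V →L[ℝ] H} {cInv : W →L[ℝ] W}
  {f : ℝ → H} {F : ℝ → W} {y0 : H}

theorem Mval_congr {φ φ' : ℝ → V} {σ σ' : ℝ → W}
    (h1 : (fun t => ι (φ t)) =ᵐ[volume.restrict (Set.Ioo 0 T)]
      fun t => ι (φ' t))
    (h2 : ι (φ 0) = ι (φ' 0))
    (h3 : σ =ᵐ[volume.restrict (Set.Ioo 0 T)] σ') :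
    Mval T ι cInv f F y0 φ σ = Mval T ι cInv f F y0 φ' σ' := by
  unfold Mval
  have e1 : (∫ t in Set.Ioo 0 T, ⟪f t, ι (φ t)⟫) = ∫ t in Set.Ioo 0 T, ⟪f t, ι (φ' t)⟫ :=
    integral_congr_ae (by filter_upwards [h1] with t ht; rw [ht])
  have e2 : (∫ t in Set.Ioo 0 T, ⟪cInv (F t), σ t⟫) = ∫ t in Set.Ioo 0 T, ⟪cInv (F t), σ' t⟫ :=
    integral_congr_ae (by filter_upwards [h3] with t ht; rw [ht])
  rw [e1, e2, h2]

theorem Mval_add {φ φ' : ℝ → V} {σ σ' : ℝ → W}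
    (hf : MemLp f 2 (volume.restrict (Set.Ioo 0 T)))
    (hF : MemLp F 2 (volume.restrict (Set.Ioo 0 T)))
    (mφ : MemLp φ 2 (volume.restrict (Set.Ioo 0 T)))
    (mφ' : MemLp φ' 2 (volume.restrict (Set.Ioo 0 T)))
    (mσ : MemLp σ 2 (volume.restrict (Set.Ioo 0 T)))
    (mσ' : MemLp σ' 2 (volume.restrict (Set.Ioo 0 T))) :
    Mval T ι cInv f F y0 (φ + φ') (σ + σ') =
      Mval T ι cInv f F y0 φ σ + Mval T ι cInv f F y0 φ' σ' := by
  unfold Mval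
  have i1 : Integrable (fun t => ⟪f t, ι (φ t)⟫) (volume.restrict (Set.Ioo 0 T)) :=
    integrable_inner_of_memℒp hf (ContinuousLinearMap.comp_memLp' ι mφ)
  have i2 : Integrable (fun t => ⟪f t, ι (φ' t)⟫) (volume.restrict (Set.Ioo 0 T)) :=
    integrable_inner_of_memℒp hf (ContinuousLinearMap.comp_memLp' ι mφ')
  have i3 : Integrable (fun t => ⟪cInv (F t), σ t⟫) (volume.restrict (Set.Ioo 0 T)) :=
    integrable_inner_of_memℒp (ContinuousLinearMap.comp_memLp' cInv hF) mσ
  have i4 : Integrable (fun t => ⟪cInv (F t), σ' t⟫) (volume.restrict (Set.Ioo 0 T)) :=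
    integrable_inner_of_memℒp (ContinuousLinearMap.comp_memLp' cInv hF) mσ'
  have e1 : (∫ t in Set.Ioo 0 T, ⟪f t, ι ((φ + φ') t)⟫) =
      (∫ t in Set.Ioo 0 T, ⟪f t, ι (φ t)⟫) + ∫ t in Set.Ioo 0 T, ⟪f t, ι (φ' t)⟫ := by
    rw [← integral_add i1 i2]
    refine integral_congr_ae (Filter.Eventually.of_forall fun t => ?_)
    simp [inner_add_right]
  have e2 : (∫ t in Set.Ioo 0 T, ⟪cInv (F t), (σ + σ') t⟫) =
      (∫ t in Set.Ioo 0 T, ⟪cInv (F t), σ t⟫) + ∫ t in Set.Ioo 0 T, ⟪cInv (F t), σ' t⟫ := by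
    rw [← integral_add i3 i4]
    refine integral_congr_ae (Filter.Eventually.of_forall fun t => ?_)
    simp [inner_add_right]
  rw [e1, e2]
  simp only [Pi.add_apply, map_add, inner_add_right]
  ring

theorem Mval_smul (r : ℝ) {φ : ℝ → V} {σ : ℝ → W} :
    Mval T ι cInv f F y0 (r • φ) (r • σ) = r * Mval T ι cInv f F y0 φ σ := by
  unfold Mval
  have e1 : (∫ t in Set.Ioo 0 T, ⟪f t, ι ((r • φ) t)⟫) =
      r * ∫ t in Set.Ioo 0 T, ⟪f t, ι (φ t)⟫ := by
    rw [← integral_const_mul]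
    refine integral_congr_ae (Filter.Eventually.of_forall fun t => ?_)
    simp [real_inner_smul_right]
  have e2 : (∫ t in Set.Ioo 0 T, ⟪cInv (F t), (r • σ) t⟫) =
      r * ∫ t in Set.Ioo 0 T, ⟪cInv (F t), σ t⟫ := by
    rw [← integral_const_mul]
    refine integral_congr_ae (Filter.Eventually.of_forall fun t => ?_)
    simp [real_inner_smul_right]
  rw [e1, e2]
  simp only [Pi.smul_apply, _root_.map_smul, real_inner_smul_right]
  ring

theorem Mval_bound {φ : ℝ → V} {σ : ℝ → W} {R : ℝ} (hR : 0 ≤ R)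
    (hf : MemLp f 2 (volume.restrict (Set.Ioo 0 T)))
    (hF : MemLp F 2 (volume.restrict (Set.Ioo 0 T)))
    (mφ : MemLp φ 2 (volume.restrict (Set.Ioo 0 T)))
    (mσ : MemLp σ 2 (volume.restrict (Set.Ioo 0 T)))
    (hE : (∫ t in Set.Ioo 0 T, ‖ι (φ t)‖ ^ 2) + ‖ι (φ 0)‖ ^ 2 +
      (∫ t in Set.Ioo 0 T, ‖σ t‖ ^ 2) ≤ R) :
    |Mval T ι cInv f F y0 φ σ| ≤
      (‖hf.toLp f‖ + ‖y0‖ +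
        ‖(ContinuousLinearMap.comp_memLp' cInv hF).toLp (cInv ∘ F)‖) *
        Real.sqrt R := by
  set μ := volume.restrict (Set.Ioo 0 T)
  have hmιφ : MemLp (fun t => ι (φ t)) 2 μ := ContinuousLinearMap.comp_memLp' ι mφ
  have hA : 0 ≤ ∫ t in Set.Ioo 0 T, ‖ι (φ t)‖ ^ 2 := integral_nonneg fun t => sq_nonneg _
  have hB : (0:ℝ) ≤ ‖ι (φ 0)‖ ^ 2 := sq_nonneg _
  have hD : 0 ≤ ∫ t in Set.Ioo 0 T, ‖σ t‖ ^ 2 := integral_nonneg fun t => sq_nonneg _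
  have hφn : ‖hmιφ.toLp _‖ ≤ Real.sqrt R := by
    rw [← Real.sqrt_sq (norm_nonneg _)]
    refine Real.sqrt_le_sqrt ?_
    rw [norm_toLp_sq]
    linarith
  have hσn : ‖mσ.toLp σ‖ ≤ Real.sqrt R := by
    rw [← Real.sqrt_sq (norm_nonneg _)]
    refine Real.sqrt_le_sqrt ?_
    rw [norm_toLp_sq]
    linarith
  have hφ0 : ‖ι (φ 0)‖ ≤ Real.sqrt R := by
    rw [← Real.sqrt_sq (norm_nonneg _)]
    refine Real.sqrt_le_sqrt ?_
    linarith
  have t1 : |∫ t in Set.Ioo 0 T, ⟪f t, ι (φ t)⟫| ≤ ‖hf.toLp f‖ * Real.sqrt R := by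
    rw [← inner_toLp_eq hf hmιφ]
    calc |⟪hf.toLp f, hmιφ.toLp _⟫| ≤ ‖hf.toLp f‖ * ‖hmιφ.toLp _‖ :=
          abs_real_inner_le_norm _ _
      _ ≤ ‖hf.toLp f‖ * Real.sqrt R := by
          exact mul_le_mul_of_nonneg_left hφn (norm_nonneg _)
  have t2 : |⟪y0, ι (φ 0)⟫| ≤ ‖y0‖ * Real.sqrt R := by
    calc |⟪y0, ι (φ 0)⟫| ≤ ‖y0‖ * ‖ι (φ 0)‖ := abs_real_inner_le_norm _ _
      _ ≤ ‖y0‖ * Real.sqrt R := mul_le_mul_of_nonneg_left hφ0 (norm_nonneg _)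
  have t3 : |∫ t in Set.Ioo 0 T, ⟪cInv (F t), σ t⟫| ≤
      ‖(ContinuousLinearMap.comp_memLp' cInv hF).toLp (cInv ∘ F)‖ * Real.sqrt R := by
    rw [show (fun t => ⟪cInv (F t), σ t⟫) = fun t => ⟪(cInv ∘ F) t, σ t⟫ from rfl,
      ← inner_toLp_eq (ContinuousLinearMap.comp_memLp' cInv hF) mσ]
    calc |⟪(ContinuousLinearMap.comp_memLp' cInv hF).toLp _, mσ.toLp σ⟫| ≤
          ‖(ContinuousLinearMap.comp_memLp' cInv hF).toLp (cInv ∘ F)‖ * ‖mσ.toLp σ‖ :=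
          abs_real_inner_le_norm _ _
      _ ≤ _ := mul_le_mul_of_nonneg_left hσn (norm_nonneg _)
  unfold Mval
  calc |(∫ t in Set.Ioo 0 T, ⟪f t, ι (φ t)⟫) + ⟪y0, ι (φ 0)⟫ +
      ∫ t in Set.Ioo 0 T, ⟪cInv (F t), σ t⟫| ≤
      |∫ t in Set.Ioo 0 T, ⟪f t, ι (φ t)⟫| + |⟪y0, ι (φ 0)⟫| +
      |∫ t in Set.Ioo 0 T, ⟪cInv (F t), σ t⟫| := by
        exact (abs_add_le _ _).trans (by gcongr; exact abs_add_le _ _)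
    _ ≤ _ := by rw [add_mul, add_mul]; exact add_le_add (add_le_add t1 t2) t3
  done

end CMaux

open CMaux

/-- Proposition A.2: there exists a unique solution by transposition of the
first-order parabolic system. -/
theorem firstOrder_system_transposition_wellPosed
    (T : ℝ) (hT : 0 < T)
    (ι : V →L[ℝ] H) (grad : V →L[ℝ] W) (cInv : W →L[ℝ] W)
    (dmul : ℝ → H →L[ℝ] H)
    (hι : Function.Injective ι) (hdense : DenseRange ι)
    (c₀ : ℝ) (hc₀ : 0 < c₀)
    (hell : ∀ u : W, c₀ * ‖u‖ ^ 2 ≤ ⟪cInv u, u⟫)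
    (hcsym : ∀ u v : W, ⟪cInv u, v⟫ = ⟪u, cInv v⟫)
    (Md : ℝ) (hMd : 0 ≤ Md) (hd : ∀ t : ℝ, ‖dmul t‖ ≤ Md)
    -- data
    (f : ℝ → H) (F : ℝ → W) (y0 : H)
    (hf : MemLp f 2 (volume.restrict (Set.Ioo 0 T)))
    (hF : MemLp F 2 (volume.restrict (Set.Ioo 0 T)))
    -- existence of backward weak solutions (Proposition A.1, reversed time)
    (hback : ∀ (g : ℝ → H) (G : ℝ → W),
      MemLp g 2 (volume.restrict (Set.Ioo 0 T)) →
      MemLp G 2 (volume.restrict (Set.Ioo 0 T)) →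
      ∃ (φ : ℝ → V) (φt : ℝ → V →L[ℝ] ℝ) (σ : ℝ → W),
        IsBackwardWeakSolution T ι grad cInv dmul g G φ φt σ)
    -- energy estimate for the backward weak solutions
    (hbackest : ∃ C > 0, ∀ (g : ℝ → H) (G : ℝ → W)
      (φ : ℝ → V) (φt : ℝ → V →L[ℝ] ℝ) (σ : ℝ → W),
      IsBackwardWeakSolution T ι grad cInv dmul g G φ φt σ →
      (∫ t in Set.Ioo 0 T, ‖ι (φ t)‖ ^ 2) + ‖ι (φ 0)‖ ^ 2 +
          (∫ t in Set.Ioo 0 T, ‖σ t‖ ^ 2) ≤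
        C * ((∫ t in Set.Ioo 0 T, ‖g t‖ ^ 2) +
          (∫ t in Set.Ioo 0 T, ‖G t‖ ^ 2))) :
    ∃! yp : Lp H 2 (volume.restrict (Set.Ioo 0 T)) ×
        Lp W 2 (volume.restrict (Set.Ioo 0 T)),
      ∀ (g : ℝ → H) (G : ℝ → W)
        (hg : MemLp g 2 (volume.restrict (Set.Ioo 0 T)))
        (hG : MemLp G 2 (volume.restrict (Set.Ioo 0 T)))
        (φ : ℝ → V) (φt : ℝ → V →L[ℝ] ℝ) (σ : ℝ → W),
        IsBackwardWeakSolution T ι grad cInv dmul g G φ φt σ →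
        ⟪yp.1, hg.toLp g⟫ + ⟪yp.2, hG.toLp G⟫ =
          (∫ t in Set.Ioo 0 T, ⟪f t, ι (φ t)⟫) + ⟪y0, ι (φ 0)⟫ +
            ∫ t in Set.Ioo 0 T, ⟪cInv (F t), σ t⟫ := by
  classical
  obtain ⟨C, hC, hest⟩ := hbackest
  -- choice of backward solutions for the data (z, 0) and (0, z)
  have exH : ∀ z : Lp H 2 (volume.restrict (Set.Ioo 0 T)), ∃ s : (ℝ → V) × (ℝ → V →L[ℝ] ℝ) × (ℝ → W),
      IsBackwardWeakSolution T ι grad cInv dmul (⇑z) 0 s.1 s.2.1 s.2.2 := by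
    intro z
    obtain ⟨φ, φt, σ, h⟩ := hback (⇑z) 0 (Lp.memLp z) MemLp.zero
    exact ⟨⟨φ, φt, σ⟩, h⟩
  choose SH hSH using exH
  have exW : ∀ z : Lp W 2 (volume.restrict (Set.Ioo 0 T)), ∃ s : (ℝ → V) × (ℝ → V →L[ℝ] ℝ) × (ℝ → W),
      IsBackwardWeakSolution T ι grad cInv dmul 0 (⇑z) s.1 s.2.1 s.2.2 := by
    intro z
    obtain ⟨φ, φt, σ, h⟩ := hback 0 (⇑z) MemLp.zero (Lp.memLp z)
    exact ⟨⟨φ, φt, σ⟩, h⟩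
  choose SW hSW using exW
  set K : ℝ := ‖hf.toLp f‖ + ‖y0‖ +
    ‖(ContinuousLinearMap.comp_memLp' cInv hF).toLp (cInv ∘ F)‖ with hKdef
  have hK0 : 0 ≤ K := by positivity
  -- L² norms of coercions
  have hzsqH : ∀ z : Lp H 2 (volume.restrict (Set.Ioo 0 T)), (∫ t in Set.Ioo 0 T, ‖z t‖ ^ 2) = ‖z‖ ^ 2 := by
    intro z
    have h := norm_toLp_sq (Lp.memLp z)
    rw [Lp.toLp_coeFn] at h
    exact h.symm
  have hzsqW : ∀ z : Lp W 2 (volume.restrict (Set.Ioo 0 T)), (∫ t in Set.Ioo 0 T, ‖z t‖ ^ 2) = ‖z‖ ^ 2 := by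
    intro z
    have h := norm_toLp_sq (Lp.memLp z)
    rw [Lp.toLp_coeFn] at h
    exact h.symm
  -- bounds
  have boundH : ∀ z : Lp H 2 (volume.restrict (Set.Ioo 0 T)),
      |Mval T ι cInv f F y0 (SH z).1 (SH z).2.2| ≤ K * Real.sqrt C * ‖z‖ := by
    intro z
    have h := hSH z
    have hE := hest _ _ _ _ _ h
    rw [hzsqH z] at hE
    have hz0 : (∫ t in Set.Ioo 0 T, ‖(0 : ℝ → W) t‖ ^ 2) = 0 := by simp
    rw [hz0, add_zero] at hE
    have hb := Mval_bound (cInv := cInv) (y0 := y0) (R := C * ‖z‖ ^ 2) (by positivity)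
      hf hF h.1 h.2.2.1 hE
    calc |Mval T ι cInv f F y0 (SH z).1 (SH z).2.2| ≤ K * Real.sqrt (C * ‖z‖ ^ 2) := hb
      _ = K * Real.sqrt C * ‖z‖ := by
          rw [Real.sqrt_mul hC.le, Real.sqrt_sq (norm_nonneg _)]; ring
  have boundW : ∀ z : Lp W 2 (volume.restrict (Set.Ioo 0 T)),
      |Mval T ι cInv f F y0 (SW z).1 (SW z).2.2| ≤ K * Real.sqrt C * ‖z‖ := by
    intro z
    have h := hSW z
    have hE := hest _ _ _ _ _ h
    rw [hzsqW z] at hE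
    have hz0 : (∫ t in Set.Ioo 0 T, ‖(0 : ℝ → H) t‖ ^ 2) = 0 := by simp
    rw [hz0, zero_add] at hE
    have hb := Mval_bound (cInv := cInv) (y0 := y0) (R := C * ‖z‖ ^ 2) (by positivity)
      hf hF h.1 h.2.2.1 hE
    calc |Mval T ι cInv f F y0 (SW z).1 (SW z).2.2| ≤ K * Real.sqrt (C * ‖z‖ ^ 2) := hb
      _ = K * Real.sqrt C * ‖z‖ := by
          rw [Real.sqrt_mul hC.le, Real.sqrt_sq (norm_nonneg _)]; ring
  -- additivity / homogeneity
  have addH : ∀ z z' : Lp H 2 (volume.restrict (Set.Ioo 0 T)),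
      Mval T ι cInv f F y0 (SH (z + z')).1 (SH (z + z')).2.2 =
        Mval T ι cInv f F y0 (SH z).1 (SH z).2.2 +
        Mval T ι cInv f F y0 (SH z').1 (SH z').2.2 := by
    intro z z'
    have h1 := hSH z
    have h2 := hSH z'
    have h3 := hSH (z + z')
    have hsum := bws_add h1 h2
    have hgeq : (⇑(z + z') : ℝ → H) =ᵐ[volume.restrict (Set.Ioo 0 T)] ⇑z + ⇑z' := Lp.coeFn_add z z'
    have hGeq : (0 : ℝ → W) =ᵐ[volume.restrict (Set.Ioo 0 T)] 0 + 0 := by simp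
    obtain ⟨e1, e2, e3⟩ := bws_welldef hC hest hgeq hGeq h3 hsum
    rw [Mval_congr (f := f) (F := F) (y0 := y0) e1 e2 e3]
    exact Mval_add hf hF h1.1 h2.1 h1.2.2.1 h2.2.2.1
  have addW : ∀ z z' : Lp W 2 (volume.restrict (Set.Ioo 0 T)),
      Mval T ι cInv f F y0 (SW (z + z')).1 (SW (z + z')).2.2 =
        Mval T ι cInv f F y0 (SW z).1 (SW z).2.2 +
        Mval T ι cInv f F y0 (SW z').1 (SW z').2.2 := by
    intro z z'
    have h1 := hSW z
    have h2 := hSW z'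
    have h3 := hSW (z + z')
    have hsum := bws_add h1 h2
    have hgeq : (0 : ℝ → H) =ᵐ[volume.restrict (Set.Ioo 0 T)] 0 + 0 := by simp
    have hGeq : (⇑(z + z') : ℝ → W) =ᵐ[volume.restrict (Set.Ioo 0 T)] ⇑z + ⇑z' := Lp.coeFn_add z z'
    obtain ⟨e1, e2, e3⟩ := bws_welldef hC hest hgeq hGeq h3 hsum
    rw [Mval_congr (f := f) (F := F) (y0 := y0) e1 e2 e3]
    exact Mval_add hf hF h1.1 h2.1 h1.2.2.1 h2.2.2.1
  have smulH : ∀ (r : ℝ) (z : Lp H 2 (volume.restrict (Set.Ioo 0 T))),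
      Mval T ι cInv f F y0 (SH (r • z)).1 (SH (r • z)).2.2 =
        r * Mval T ι cInv f F y0 (SH z).1 (SH z).2.2 := by
    intro r z
    have h1 := hSH z
    have h3 := hSH (r • z)
    have hsm := bws_smul r h1
    have hgeq : (⇑(r • z) : ℝ → H) =ᵐ[volume.restrict (Set.Ioo 0 T)] r • ⇑z := Lp.coeFn_smul r z
    have hGeq : (0 : ℝ → W) =ᵐ[volume.restrict (Set.Ioo 0 T)] r • 0 := by simp
    obtain ⟨e1, e2, e3⟩ := bws_welldef hC hest hgeq hGeq h3 hsm
    rw [Mval_congr (f := f) (F := F) (y0 := y0) e1 e2 e3]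
    exact Mval_smul r
  have smulW : ∀ (r : ℝ) (z : Lp W 2 (volume.restrict (Set.Ioo 0 T))),
      Mval T ι cInv f F y0 (SW (r • z)).1 (SW (r • z)).2.2 =
        r * Mval T ι cInv f F y0 (SW z).1 (SW z).2.2 := by
    intro r z
    have h1 := hSW z
    have h3 := hSW (r • z)
    have hsm := bws_smul r h1
    have hgeq : (0 : ℝ → H) =ᵐ[volume.restrict (Set.Ioo 0 T)] r • 0 := by simp
    have hGeq : (⇑(r • z) : ℝ → W) =ᵐ[volume.restrict (Set.Ioo 0 T)] r • ⇑z := Lp.coeFn_smul r z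
    obtain ⟨e1, e2, e3⟩ := bws_welldef hC hest hgeq hGeq h3 hsm
    rw [Mval_congr (f := f) (F := F) (y0 := y0) e1 e2 e3]
    exact Mval_smul r
  -- Riesz representation
  let ΦH : Lp H 2 (volume.restrict (Set.Ioo 0 T)) →L[ℝ] ℝ := LinearMap.mkContinuous
    { toFun := fun z => Mval T ι cInv f F y0 (SH z).1 (SH z).2.2
      map_add' := addH
      map_smul' := fun r z => by simpa using smulH r z }
    (K * Real.sqrt C) (fun z => by rw [Real.norm_eq_abs]; exact boundH z)
  let ΦW : Lp W 2 (volume.restrict (Set.Ioo 0 T)) →L[ℝ] ℝ := LinearMap.mkContinuous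
    { toFun := fun z => Mval T ι cInv f F y0 (SW z).1 (SW z).2.2
      map_add' := addW
      map_smul' := fun r z => by simpa using smulW r z }
    (K * Real.sqrt C) (fun z => by rw [Real.norm_eq_abs]; exact boundW z)
  let y : Lp H 2 (volume.restrict (Set.Ioo 0 T)) := (InnerProductSpace.toDual ℝ (Lp H 2 (volume.restrict (Set.Ioo 0 T)))).symm ΦH
  let p : Lp W 2 (volume.restrict (Set.Ioo 0 T)) := (InnerProductSpace.toDual ℝ (Lp W 2 (volume.restrict (Set.Ioo 0 T)))).symm ΦW
  have hy : ∀ z : Lp H 2 (volume.restrict (Set.Ioo 0 T)), ⟪y, z⟫ = Mval T ι cInv f F y0 (SH z).1 (SH z).2.2 :=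
    fun z => InnerProductSpace.toDual_symm_apply
  have hp : ∀ z : Lp W 2 (volume.restrict (Set.Ioo 0 T)), ⟪p, z⟫ = Mval T ι cInv f F y0 (SW z).1 (SW z).2.2 :=
    fun z => InnerProductSpace.toDual_symm_apply
  -- the key identity
  have hmain : ∀ (g : ℝ → H) (G : ℝ → W)
      (hg : MemLp g 2 (volume.restrict (Set.Ioo 0 T))) (hG : MemLp G 2 (volume.restrict (Set.Ioo 0 T)))
      (φ : ℝ → V) (φt : ℝ → V →L[ℝ] ℝ) (σ : ℝ → W),
      IsBackwardWeakSolution T ι grad cInv dmul g G φ φt σ →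
      ⟪y, hg.toLp g⟫ + ⟪p, hG.toLp G⟫ = Mval T ι cInv f F y0 φ σ := by
    intro g G hg hG φ φt σ hsol
    have h1 := hSH (hg.toLp g)
    have h2 := hSW (hG.toLp G)
    have hsum := bws_add h1 h2
    have hgeq : g =ᵐ[volume.restrict (Set.Ioo 0 T)] (⇑(hg.toLp g) + 0 : ℝ → H) := by
      filter_upwards [hg.coeFn_toLp] with t ht
      simp [ht]
    have hGeq : G =ᵐ[volume.restrict (Set.Ioo 0 T)] (0 + ⇑(hG.toLp G) : ℝ → W) := by
      filter_upwards [hG.coeFn_toLp] with t ht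
      simp [ht]
    obtain ⟨e1, e2, e3⟩ := bws_welldef hC hest hgeq hGeq hsol hsum
    rw [hy, hp,
      ← Mval_add (y0 := y0) hf hF h1.1 h2.1 h1.2.2.1 h2.2.2.1,
      ← Mval_congr (f := f) (F := F) (y0 := y0) e1 e2 e3]
  refine ⟨(y, p), ?_, ?_⟩
  · intro g G hg hG φ φt σ hsol
    simpa [Mval] using hmain g G hg hG φ φt σ hsol
  · rintro ⟨y', p'⟩ h'
    have c1 : y' = y := by
      refine ext_inner_right ℝ fun z => ?_
      obtain ⟨φ, φt, σ, hsol⟩ := hback (⇑z) 0 (Lp.memLp z) MemLp.zero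
      have e' := h' (⇑z) 0 (Lp.memLp z) MemLp.zero φ φt σ hsol
      have e := hmain (⇑z) 0 (Lp.memLp z) MemLp.zero φ φt σ hsol
      rw [Lp.toLp_coeFn, MemLp.toLp_zero, inner_zero_right, add_zero] at e' e
      rw [e', e]
      rfl
    have c2 : p' = p := by
      refine ext_inner_right ℝ fun z => ?_
      obtain ⟨φ, φt, σ, hsol⟩ := hback 0 (⇑z) MemLp.zero (Lp.memLp z)
      have e' := h' 0 (⇑z) MemLp.zero (Lp.memLp z) φ φt σ hsol
      have e := hmain 0 (⇑z) MemLp.zero (Lp.memLp z) φ φt σ hsol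
      rw [Lp.toLp_coeFn, MemLp.toLp_zero, inner_zero_right, zero_add] at e' e
      rw [e', e]
      rfl
    exact Prod.ext c1 c2
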